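/- Any quadrature rule with weights w₀ = κ/(D+κ), w_d = w_{D+d} = 1/(2(D+κ)) and sigma-points ξ⁽⁰⁾ = 0, ξ⁽ᵈ⁾ = √(D+κ) e_d, ξ⁽ᴰ⁺ᵈ⁾ = −√(D+κ) e_d integrates exactly every polynomial on ℝ^D of total degree at most three against the standard Gaussian density N(0, I_D). -/

import Mathlib

open MeasureTheory Real Finset

/-- Standard multivariate Gaussian density on `Fin D → ℝ`. -/
noncomputable def stdGaussianPdf (D : ℕ) (x : Fin D → ℝ) : ℝ :=
  ((Real.sqrt (2 * Real.pi))⁻¹) ^ D * Real.exp (-(∑ d, x d ^ 2) / 2)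

/-- The unscented-transform sigma-points with scaling `c = D + κ`. -/
noncomputable def utPoint (D : ℕ) (c : ℝ) : Fin (2 * D + 1) → Fin D → ℝ := fun n d =>
  if n.val = 0 then 0
  else if n.val ≤ D then (if d.val = n.val - 1 then Real.sqrt c else 0)
  else (if d.val = n.val - D - 1 then -Real.sqrt c else 0)

/-- The unscented-transform weights. -/
noncomputable def utWeight (D : ℕ) (κ : ℝ) : Fin (2 * D + 1) → ℝ := fun n =>
  if n.val = 0 then κ / (D + κ) else 1 / (2 * (D + κ))

noncomputable def oneG (t : ℝ) : ℝ := (Real.sqrt (2 * Real.pi))⁻¹ * Real.exp (-(t ^ 2) / 2)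

noncomputable def momG (k : ℕ) : ℝ := ∫ t : ℝ, t ^ k * oneG t

lemma integrable_pow_exp (k : ℕ) :
    Integrable (fun t : ℝ => t ^ k * Real.exp (-(t ^ 2) / 2)) := by
  have h := integrable_rpow_mul_exp_neg_mul_sq (b := 1/2) (by norm_num)
    (s := (k : ℝ)) (lt_of_lt_of_le neg_one_lt_zero (Nat.cast_nonneg k))
  have e : (fun t : ℝ => t ^ k * Real.exp (-(t ^ 2) / 2))
      = fun x : ℝ => x ^ (k : ℝ) * Real.exp (-(1/2) * x ^ 2) := by
    funext t
    rw [Real.rpow_natCast, show -(1/2) * t ^ 2 = -(t ^ 2) / 2 by ring]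
  rw [e]; exact h

lemma integrable_pow_oneG (k : ℕ) : Integrable (fun t : ℝ => t ^ k * oneG t) := by
  have := ((integrable_pow_exp k).const_mul ((Real.sqrt (2 * Real.pi))⁻¹))
  refine this.congr ?_
  filter_upwards with t
  unfold oneG; ring

lemma integral_exp_gauss : ∫ t : ℝ, Real.exp (-(t ^ 2) / 2) = Real.sqrt (2 * Real.pi) := by
  have h := integral_gaussian (1/2)
  simp_rw [show ∀ t : ℝ, -(1/2 : ℝ) * t ^ 2 = -(t ^ 2) / 2 from fun t => by ring] at h
  rw [h, show (Real.pi / (1/2)) = 2 * Real.pi by ring]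

lemma momG_zero : momG 0 = 1 := by
  unfold momG
  simp_rw [pow_zero, one_mul]
  unfold oneG
  rw [MeasureTheory.integral_const_mul, integral_exp_gauss,
    inv_mul_cancel₀ (ne_of_gt (Real.sqrt_pos.2 (by positivity)))]

lemma momG_odd (k : ℕ) (hk : Odd k) : momG k = 0 := by
  unfold momG
  have h : ∫ t : ℝ, t ^ k * oneG t = ∫ t : ℝ, (-t) ^ k * oneG (-t) :=
    (integral_neg_eq_self (fun t : ℝ => t ^ k * oneG t) volume).symm
  have h2 : ∀ t : ℝ, (-t) ^ k * oneG (-t) = -(t ^ k * oneG t) := by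
    intro t
    rw [hk.neg_pow]
    unfold oneG
    rw [neg_pow t 2]
    norm_num
  have h3 : (∫ t : ℝ, t ^ k * oneG t) = -∫ t : ℝ, t ^ k * oneG t := by
    conv_lhs => rw [h]
    simp_rw [h2]
    exact integral_neg _
  linarith

lemma integral_sq_exp : ∫ t : ℝ, t ^ 2 * Real.exp (-(t ^ 2) / 2) = Real.sqrt (2 * Real.pi) := by
  have hu : ∀ x : ℝ, HasDerivAt (fun x : ℝ => x) 1 x := fun x => hasDerivAt_id x
  have hv : ∀ x : ℝ, HasDerivAt (fun x : ℝ => -Real.exp (-(x ^ 2) / 2))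
      (x * Real.exp (-(x ^ 2) / 2)) x := by
    intro x
    have h1 : HasDerivAt (fun x : ℝ => -(x ^ 2) / 2) (-x) x := by
      have := ((hasDerivAt_pow 2 x).neg).div_const 2
      exact this.congr_deriv (by push_cast; ring)
    have h2 := (h1.exp).neg
    exact h2.congr_deriv (by ring)
  have huv' : Integrable ((fun x : ℝ => x) * fun x => x * Real.exp (-(x ^ 2) / 2)) := by
    refine (integrable_pow_exp 2).congr ?_
    filter_upwards with t
    simp only [Pi.mul_apply]; ring
  have hu'v : Integrable ((fun _ : ℝ => (1:ℝ)) * fun x => -Real.exp (-(x ^ 2) / 2)) := by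
    refine ((integrable_pow_exp 0).neg).congr ?_
    filter_upwards with t
    simp only [Pi.mul_apply, Pi.neg_apply, pow_zero]; ring
  have huv : Integrable ((fun x : ℝ => x) * fun x => -Real.exp (-(x ^ 2) / 2)) := by
    refine ((integrable_pow_exp 1).neg).congr ?_
    filter_upwards with t
    simp only [Pi.mul_apply, Pi.neg_apply, pow_one]; ring
  have H := integral_mul_deriv_eq_deriv_mul_of_integrable (fun x _ => hu x) (fun x _ => hv x) huv' hu'v huv
  have e1 : ∀ x : ℝ, x ^ 2 * Real.exp (-(x ^ 2) / 2) = x * (x * Real.exp (-(x ^ 2) / 2)) :=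
    fun x => by ring
  simp_rw [e1]
  rw [H]
  simp_rw [one_mul, integral_neg, neg_neg]
  exact integral_exp_gauss

lemma momG_two : momG 2 = 1 := by
  unfold momG oneG
  simp_rw [show ∀ t : ℝ, t ^ 2 * ((Real.sqrt (2 * Real.pi))⁻¹ * Real.exp (-(t ^ 2) / 2))
      = (Real.sqrt (2 * Real.pi))⁻¹ * (t ^ 2 * Real.exp (-(t ^ 2) / 2)) from fun t => by ring]
  rw [MeasureTheory.integral_const_mul, integral_sq_exp,
    inv_mul_cancel₀ (ne_of_gt (Real.sqrt_pos.2 (by positivity)))]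

noncomputable def gP (D : ℕ) (c : ℝ) (i : ℕ) (d : Fin D) : ℝ :=
  if i = 0 then 0
  else if i ≤ D then (if d.val = i - 1 then Real.sqrt c else 0)
  else (if d.val = i - D - 1 then -Real.sqrt c else 0)

noncomputable def gW (D : ℕ) (κ : ℝ) (i : ℕ) : ℝ :=
  if i = 0 then κ / (D + κ) else 1 / (2 * (D + κ))

lemma qsplit (D : ℕ) (f : ℕ → ℝ) :
    ∑ n : Fin (2*D+1), f n.val
      = f 0 + ((∑ i ∈ range D, f (i+1)) + ∑ i ∈ range D, f (D + i + 1)) := by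
  rw [show (∑ n : Fin (2*D+1), f n.val) = ∑ i ∈ range (2*D+1), f i from
    Fin.sum_univ_eq_sum_range f (2*D+1)]
  rw [Finset.sum_range_succ', two_mul,
    ← Finset.sum_range_add_sum_Ico (fun i => f (i+1)) (Nat.le_add_right D D),
    Finset.sum_Ico_eq_sum_range]
  simp only [Nat.add_sub_cancel_left, Nat.add_sub_cancel]
  have : ∀ i, f (D + i + 1) = f (D + (i + 1)) := fun i => by rw [Nat.add_assoc]
  simp_rw [this]
  ring

lemma pdf_prod (D : ℕ) (x : Fin D → ℝ) : stdGaussianPdf D x = ∏ d, oneG (x d) := by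
  unfold stdGaussianPdf oneG
  rw [Finset.prod_mul_distrib, Finset.prod_const, Finset.card_univ, Fintype.card_fin]
  congr 1
  rw [← Real.exp_sum]
  congr 1
  rw [← Finset.sum_div, ← Finset.sum_neg_distrib]

lemma integrable_monomial (D : ℕ) (α : Fin D →₀ ℕ) :
    Integrable (fun x : Fin D → ℝ => (∏ d, x d ^ α d) * stdGaussianPdf D x) := by
  have e : ∀ x : Fin D → ℝ, (∏ d, x d ^ α d) * stdGaussianPdf D x
      = ∏ d, (x d ^ α d * oneG (x d)) := by
    intro x; rw [pdf_prod, ← Finset.prod_mul_distrib]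
  simp_rw [e]
  exact Integrable.fintype_prod (f := fun d (t : ℝ) => t ^ α d * oneG t)
    (fun d => integrable_pow_oneG (α d))

lemma integral_monomial (D : ℕ) (α : Fin D →₀ ℕ) :
    ∫ x : Fin D → ℝ, (∏ d, x d ^ α d) * stdGaussianPdf D x = ∏ d, momG (α d) := by
  have e : ∀ x : Fin D → ℝ, (∏ d, x d ^ α d) * stdGaussianPdf D x
      = ∏ d, (x d ^ α d * oneG (x d)) := by
    intro x; rw [pdf_prod, ← Finset.prod_mul_distrib]
  simp_rw [e]
  exact MeasureTheory.integral_fintype_prod_eq_prod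
    (fun d (t : ℝ) => t ^ α d * oneG t)

lemma gP_zero_or (D : ℕ) (c : ℝ) (i : ℕ) {d₁ d₂ : Fin D} (h : d₁ ≠ d₂) :
    gP D c i d₁ = 0 ∨ gP D c i d₂ = 0 := by
  have hv : d₁.val ≠ d₂.val := fun hh => h (Fin.ext hh)
  unfold gP
  by_cases h0 : i = 0
  · simp [h0]
  by_cases hle : i ≤ D
  · by_cases h1 : d₁.val = i - 1
    · right; simp [h0, hle, show d₂.val ≠ i - 1 by omega]
    · left; simp [h0, hle, h1]
  · by_cases h1 : d₁.val = i - D - 1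
    · right; simp [h0, hle, show d₂.val ≠ i - D - 1 by omega]
    · left; simp [h0, hle, h1]

lemma key (D : ℕ) (hD : 1 ≤ D) (κ : ℝ) (hκ : (D : ℝ) + κ > 0) (α : Fin D →₀ ℕ)
    (hα : ∑ d, α d ≤ 3) :
    ∑ n : Fin (2*D+1), utWeight D κ n * ∏ d, utPoint D ((D : ℝ) + κ) n d ^ α d
      = ∏ d, momG (α d) := by
  set c : ℝ := (D : ℝ) + κ with hcdef
  have hc0 : 0 < c := hκ
  have hc0' : c ≠ 0 := ne_of_gt hc0
  have hqs : (∑ n : Fin (2*D+1), utWeight D κ n * ∏ d, utPoint D c n d ^ α d)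
      = ∑ n : Fin (2*D+1), (fun i : ℕ => gW D κ i * ∏ d, gP D c i d ^ α d) n.val := rfl
  rcases Finset.eq_empty_or_nonempty α.support with hS | hS
  · -- α = 0
    have hα0 : α = 0 := Finsupp.support_eq_empty.mp hS
    subst hα0
    rw [hqs]
    simp only [Finsupp.coe_zero, Pi.zero_apply, pow_zero, Finset.prod_const_one, mul_one,
      momG_zero]
    rw [qsplit D (fun i => gW D κ i)]
    have h1 : ∀ i, gW D κ (i + 1) = 1 / (2 * c) := fun i => by simp [gW, hcdef]
    have h2 : ∀ i, gW D κ (D + i + 1) = 1 / (2 * c) := fun i => by simp [gW, hcdef]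
    simp only [h1, h2]
    rw [Finset.sum_const, Finset.card_range]
    simp only [gW, if_pos rfl, ↓reduceIte, nsmul_eq_mul, ← hcdef]
    field_simp
    ring
  rcases Finset.eq_singleton_or_nontrivial (hS.choose_spec) with hsing | hnt
  · -- singleton support
    set d₀ := hS.choose with hd₀
    set m := α d₀ with hm
    have hmem : d₀ ∈ α.support := hS.choose_spec
    have hm1 : 1 ≤ m := Nat.one_le_iff_ne_zero.mpr (Finsupp.mem_support_iff.mp hmem)
    have hm3 : m ≤ 3 := le_trans (Finset.single_le_sum (fun d _ => Nat.zero_le (α d))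
      (Finset.mem_univ d₀)) hα
    have hzero : ∀ b : Fin D, b ≠ d₀ → α b = 0 := by
      intro b hb
      by_contra hb0
      have : b ∈ α.support := Finsupp.mem_support_iff.mpr hb0
      rw [hsing] at this
      exact hb (Finset.mem_singleton.mp this)
    have hprod : ∀ i : ℕ, (∏ d, gP D c i d ^ α d) = gP D c i d₀ ^ m := by
      intro i
      refine Finset.prod_eq_single d₀ (fun b _ hb => by rw [hzero b hb, pow_zero])
        (fun h => absurd (Finset.mem_univ d₀) h)
    have hrhs : (∏ d, momG (α d)) = momG m := by
      refine Finset.prod_eq_single d₀ (fun b _ hb => by rw [hzero b hb, momG_zero])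
        (fun h => absurd (Finset.mem_univ d₀) h)
    rw [hqs, hrhs]
    simp_rw [hprod]
    rw [qsplit D (fun i => gW D κ i * gP D c i d₀ ^ m)]
    have e0 : gW D κ 0 * gP D c 0 d₀ ^ m = 0 := by
      simp [gP, zero_pow (Nat.one_le_iff_ne_zero.mp hm1)]
    have e1 : (∑ i ∈ range D, gW D κ (i+1) * gP D c (i+1) d₀ ^ m)
        = 1 / (2 * c) * Real.sqrt c ^ m := by
      rw [Finset.sum_eq_single_of_mem d₀.val (Finset.mem_range.mpr d₀.isLt)]
      · simp only [gW, gP, hcdef]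
        rw [if_neg (Nat.succ_ne_zero _), if_neg (Nat.succ_ne_zero _),
          if_pos (by omega : (d₀.val + 1 : ℕ) ≤ D), if_pos (by omega : d₀.val = d₀.val + 1 - 1)]
      · intro b hb hbne
        simp only [gP]
        rw [if_neg (Nat.succ_ne_zero _), if_pos (by
          have := Finset.mem_range.mp hb; omega : (b + 1 : ℕ) ≤ D),
          if_neg (by omega : ¬ d₀.val = b + 1 - 1),
          zero_pow (Nat.one_le_iff_ne_zero.mp hm1), mul_zero]
    have e2 : (∑ i ∈ range D, gW D κ (D+i+1) * gP D c (D+i+1) d₀ ^ m)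
        = 1 / (2 * c) * (-Real.sqrt c) ^ m := by
      rw [Finset.sum_eq_single_of_mem d₀.val (Finset.mem_range.mpr d₀.isLt)]
      · simp only [gW, gP, hcdef]
        rw [if_neg (by omega : ¬ (D + d₀.val + 1 : ℕ) = 0),
          if_neg (by omega : ¬ (D + d₀.val + 1 : ℕ) = 0),
          if_neg (by omega : ¬ (D + d₀.val + 1 : ℕ) ≤ D),
          if_pos (by omega : d₀.val = D + d₀.val + 1 - D - 1)]
      · intro b hb hbne
        simp only [gP]
        rw [if_neg (by omega : ¬ (D + b + 1 : ℕ) = 0),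
          if_neg (by omega : ¬ (D + b + 1 : ℕ) ≤ D),
          if_neg (by omega : ¬ d₀.val = D + b + 1 - D - 1),
          zero_pow (Nat.one_le_iff_ne_zero.mp hm1), mul_zero]
    rw [e0, e1, e2, zero_add]
    have hsq : Real.sqrt c ^ 2 = c := Real.sq_sqrt hc0.le
    interval_cases m
    · rw [momG_odd 1 odd_one]; ring
    · rw [momG_two]
      rw [show (-Real.sqrt c) ^ 2 = Real.sqrt c ^ 2 by ring, hsq]
      field_simp
      ring
    · rw [momG_odd 3 ⟨1, by norm_num⟩]
      rw [show (-Real.sqrt c) ^ 3 = -(Real.sqrt c ^ 3) by ring]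
      ring
  · -- at least two elements in support
    obtain ⟨d₁, h₁, d₂, h₂, hne⟩ := hnt
    have ha1 : 1 ≤ α d₁ := Nat.one_le_iff_ne_zero.mpr (Finsupp.mem_support_iff.mp h₁)
    have ha2 : 1 ≤ α d₂ := Nat.one_le_iff_ne_zero.mpr (Finsupp.mem_support_iff.mp h₂)
    have hpair : α d₁ + α d₂ ≤ ∑ d, α d := by
      have hsub : ({d₁, d₂} : Finset (Fin D)) ⊆ Finset.univ := Finset.subset_univ _
      have := Finset.sum_le_sum_of_subset (f := fun d => α d) hsub
      rwa [Finset.sum_pair hne] at this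
    have hone : α d₁ = 1 ∨ α d₂ = 1 := by omega
    have hrhs : (∏ d, momG (α d)) = 0 := by
      rcases hone with h | h
      · exact Finset.prod_eq_zero (Finset.mem_univ d₁) (by rw [h, momG_odd 1 odd_one])
      · exact Finset.prod_eq_zero (Finset.mem_univ d₂) (by rw [h, momG_odd 1 odd_one])
    rw [hqs, hrhs]
    refine Finset.sum_eq_zero (fun n _ => ?_)
    have hz : gP D c n.val d₁ = 0 ∨ gP D c n.val d₂ = 0 := gP_zero_or D c n.val hne
    show gW D κ ↑n * ∏ d, gP D c ↑n d ^ α d = 0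
    rcases hz with h | h
    · rw [Finset.prod_eq_zero (Finset.mem_univ d₁)
        (by rw [h, zero_pow (Nat.one_le_iff_ne_zero.mp ha1)]), mul_zero]
    · rw [Finset.prod_eq_zero (Finset.mem_univ d₂)
        (by rw [h, zero_pow (Nat.one_le_iff_ne_zero.mp ha2)]), mul_zero]

theorem ut_exact_degree_three (D : ℕ) (hD : 1 ≤ D) (κ : ℝ) (hκ : (D : ℝ) + κ > 0)
    (p : MvPolynomial (Fin D) ℝ) (hp : p.totalDegree ≤ 3) :
    ∑ n, utWeight D κ n * MvPolynomial.eval (utPoint D ((D : ℝ) + κ) n) p =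
      ∫ x : Fin D → ℝ, MvPolynomial.eval x p * stdGaussianPdf D x := by
  have h3 : ∀ α ∈ p.support, (∑ d, α d) ≤ 3 := by
    intro α hαs
    have h1 := MvPolynomial.le_totalDegree hαs
    have h2 : α.sum (fun _ e => e) = ∑ d, α d := Finsupp.sum_fintype _ _ (fun _ => rfl)
    rw [h2] at h1
    exact le_trans h1 hp
  have hL : (∑ n, utWeight D κ n * MvPolynomial.eval (utPoint D ((D : ℝ) + κ) n) p)
      = ∑ α ∈ p.support, MvPolynomial.coeff α p * ∏ d, momG (α d) := by
    simp_rw [MvPolynomial.eval_eq', Finset.mul_sum]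
    rw [Finset.sum_comm]
    refine Finset.sum_congr rfl (fun α hαs => ?_)
    have e : ∀ n : Fin (2*D+1), utWeight D κ n *
        (MvPolynomial.coeff α p * ∏ d, utPoint D ((D : ℝ) + κ) n d ^ α d)
        = MvPolynomial.coeff α p *
          (utWeight D κ n * ∏ d, utPoint D ((D : ℝ) + κ) n d ^ α d) := fun n => by ring
    simp_rw [e]
    rw [← Finset.mul_sum, key D hD κ hκ α (h3 α hαs)]
  have hR : (∫ x : Fin D → ℝ, MvPolynomial.eval x p * stdGaussianPdf D x)
      = ∑ α ∈ p.support, MvPolynomial.coeff α p * ∏ d, momG (α d) := by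
    have e : ∀ x : Fin D → ℝ, MvPolynomial.eval x p * stdGaussianPdf D x
        = ∑ α ∈ p.support, MvPolynomial.coeff α p
            * ((∏ d, x d ^ α d) * stdGaussianPdf D x) := by
      intro x
      rw [MvPolynomial.eval_eq', Finset.sum_mul]
      exact Finset.sum_congr rfl (fun α _ => by ring)
    simp_rw [e]
    rw [MeasureTheory.integral_finset_sum _
      (fun α _ => ((integrable_monomial D α).const_mul _))]
    refine Finset.sum_congr rfl (fun α hαs => ?_)
    rw [MeasureTheory.integral_const_mul, integral_monomial]
  rw [hL, hR]
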